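/- For positive integers c, n, m with 3 ≤ m ≤ n, one has S(c·2^n + 2^{m−1}, 2^m) ≡ 3 (mod 4). -/

import Mathlib

/-- Stirling numbers of the second kind -/
def stirling : ℕ → ℕ → ℕ
  | 0, 0 => 1
  | 0, _ + 1 => 0
  | _ + 1, 0 => 0
  | n + 1, k + 1 => stirling n k + (k + 1) * stirling n (k + 1)

open PowerSeries

abbrev R4 := ZMod 4

lemma stirling_eq_zero_of_lt : ∀ (n k : ℕ), n < k → stirling n k = 0 := by
  intro n
  induction n with
  | zero => intro k hk; match k, hk with | k+1, _ => rfl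
  | succ n ih =>
    intro k hk
    match k, hk with
    | k+1, hk =>
      show stirling n k + (k + 1) * stirling n (k + 1) = 0
      rw [ih k (by omega), ih (k+1) (by omega)]
      ring

noncomputable def F (k : ℕ) : PowerSeries R4 := PowerSeries.mk fun n => (stirling n k : R4)

lemma F_zero : F 0 = 1 := by
  ext n
  cases n with
  | zero => simp [F, coeff_mk, stirling]
  | succ n => simp [F, coeff_mk, stirling, coeff_one]

lemma F_step (k : ℕ) : (1 - C (R := R4) ((k+1 : ℕ) : R4) * X) * F (k+1) = X * F k := by
  ext n
  rw [sub_mul, one_mul, map_sub]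
  cases n with
  | zero =>
    simp [F, coeff_mk, stirling, mul_comm, coeff_zero_X_mul]
  | succ n =>
    rw [coeff_succ_X_mul, mul_assoc, coeff_C_mul, coeff_succ_X_mul]
    simp only [F, coeff_mk]
    show ((stirling (n+1) (k+1) : R4)) - (↑(k+1)) * ↑(stirling n (k+1)) = ↑(stirling n k)
    have : stirling (n+1) (k+1) = stirling n k + (k + 1) * stirling n (k + 1) := rfl
    rw [this]
    push_cast
    ring

lemma F_chain (k : ℕ) :
    (∏ j ∈ Finset.range k, (1 - C (R := R4) ((j+1 : ℕ) : R4) * X)) * F k = X ^ k := by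
  induction k with
  | zero => simp [F_zero]
  | succ k ih =>
    rw [Finset.prod_range_succ, pow_succ]
    calc (∏ j ∈ Finset.range k, (1 - C (R := R4) ((j+1:ℕ) : R4) * X)) * (1 - C (R := R4) ((k+1:ℕ) : R4) * X) * F (k+1)
        = (∏ j ∈ Finset.range k, (1 - C (R := R4) ((j+1:ℕ) : R4) * X)) * ((1 - C (R := R4) ((k+1:ℕ) : R4) * X) * F (k+1)) := by ring
      _ = (∏ j ∈ Finset.range k, (1 - C (R := R4) ((j+1:ℕ) : R4) * X)) * (X * F k) := by rw [F_step]
      _ = X ^ k * X := by rw [← mul_assoc, mul_comm _ X, mul_assoc, ih, mul_comm]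

lemma cast_4r (r t : ℕ) : ((4*r + t : ℕ) : R4) = (t : R4) := by
  push_cast
  have : ((4 : ℕ) : R4) = 0 := by decide
  push_cast at this
  rw [this]
  ring

lemma block (r : ℕ) :
    (∏ j ∈ Finset.range (4*r), (1 - C (R := R4) ((j+1 : ℕ) : R4) * X)) =
      ((1 - X^2) * (1 - C (R := R4) 2 * X))^r := by
  induction r with
  | zero => simp
  | succ r ih =>
    have h4 : 4*(r+1) = 4*r + 1 + 1 + 1 + 1 := by ring
    rw [h4, Finset.prod_range_succ, Finset.prod_range_succ, Finset.prod_range_succ,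
      Finset.prod_range_succ, ih]
    have e1 : ((4*r + 1 : ℕ) : R4) = 1 := by rw [cast_4r]; norm_num
    have e2 : ((4*r + 1 + 1 : ℕ) : R4) = 2 := by
      rw [show 4*r+1+1 = 4*r+2 by ring, cast_4r]; norm_num
    have e3 : ((4*r + 1 + 1 + 1 : ℕ) : R4) = 3 := by
      rw [show 4*r+1+1+1 = 4*r+3 by ring, cast_4r]; norm_num
    have e4 : ((4*r + 1 + 1 + 1 + 1 : ℕ) : R4) = 0 := by
      rw [show 4*r+1+1+1+1 = 4*(r+1)+0 by ring, cast_4r]; norm_num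
    rw [e1, e2, e3, e4]
    have h3 : (C (R := R4) 3) = - 1 := by
      have hd : (3 : R4) = -1 := by decide
      rw [hd, map_neg, map_one]
    rw [h3, map_zero, map_one, pow_succ]
    ring

lemma hC2 : (C (R := R4) 2 : PowerSeries R4) = 2 := by
  simp [map_ofNat]

lemma h22 : (2 : PowerSeries R4) * 2 = 0 := by
  rw [← hC2, ← map_mul]
  have : (2 : R4) * 2 = 0 := by decide
  rw [this, map_zero]

lemma two_sq : ((1 - 2 * X)^2 : PowerSeries R4) = 1 := by
  linear_combination (X^2 - X) * h22

lemma two_pow_even (t : ℕ) : ((1 - 2 * X)^(2*t) : PowerSeries R4) = 1 := by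
  rw [pow_mul, two_sq, one_pow]

lemma one_sub_sq_pow : ∀ j : ℕ, 1 ≤ j →
    ((1 - X^2 : PowerSeries R4)^(2^j)) = 1 + 2 * X^(2^j) + X^(2^(j+1)) := by
  intro j
  induction j with
  | zero => omega
  | succ j ih =>
    intro _
    rcases Nat.eq_or_lt_of_le (Nat.one_le_iff_ne_zero.mpr (by omega : j + 1 ≠ 0)) with h1 | h1
    · have hj : j = 0 := by omega
      subst hj
      norm_num
      linear_combination (-X^2) * h22
    · have hj : 1 ≤ j := by omega
      have IH := ih hj
      rw [show (2:ℕ)^(j+1+1) = 2^j * 4 by ring]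
      rw [show (2:ℕ)^(j+1) = 2^j * 2 from pow_succ 2 j, pow_mul, IH]
      rw [show (2:ℕ)^(j+1) = 2^j * 2 from pow_succ 2 j]
      rw [pow_mul, pow_mul]
      set z : PowerSeries R4 := X^(2^j) with hz
      linear_combination (z + z^2 + z^3) * h22

lemma main_id (a : ℕ) :
    ((1 + 2 * X^(2^(a+1)) + X^(2*2^(a+1)) : PowerSeries R4)) * F (4*2^(a+1))
      = X^(4*2^(a+1)) := by
  have h := F_chain (4*2^(a+1))
  rw [block] at h
  rw [mul_pow, hC2] at h
  rw [show (2:ℕ)^(a+1) = 2*2^a by ring, two_pow_even, mul_one] at h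
  rw [show 2*(2:ℕ)^a = 2^(a+1) by ring] at h
  rw [one_sub_sq_pow (a+1) (by omega)] at h
  rw [show (2:ℕ)^(a+1+1) = 2*2^(a+1) by ring] at h
  exact h

lemma key (a i : ℕ) (hi : 2 ≤ i) :
    (stirling (2^(a+1)*i) (4*2^(a+1)) : R4)
      + 2 * (stirling (2^(a+1)*(i-1)) (4*2^(a+1)) : R4)
      + (stirling (2^(a+1)*(i-2)) (4*2^(a+1)) : R4)
      = if i = 4 then 1 else 0 := by
  set A := 2^(a+1) with hA
  have hApos : 0 < A := Nat.pow_pos (by omega)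
  have h := congrArg (coeff (R := R4) (A*i)) (main_id a)
  have expand : ((1 + 2 * X^A + X^(2*A) : PowerSeries R4)) * F (4*A)
      = F (4*A) + C (R := R4) 2 * (X^A * F (4*A)) + X^(2*A) * F (4*A) := by
    rw [hC2]; ring
  rw [expand, map_add, map_add] at h
  rw [coeff_C_mul] at h
  rw [show A*i = A*(i-1) + A by
    rw [← Nat.mul_succ, Nat.succ_eq_add_one, Nat.sub_add_cancel (by omega)]] at h
  rw [coeff_X_pow_mul] at h
  rw [show A*(i-1) + A = A*(i-2) + 2*A by
    have h1 : i - 1 = (i-2) + 1 := by omega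
    rw [h1, Nat.mul_add]
    ring] at h
  rw [coeff_X_pow_mul] at h
  rw [coeff_X_pow] at h
  rw [show A*(i-2) + 2*A = A*i by
    rw [show A*(i-2) + 2*A = A*((i-2)+2) by ring, Nat.sub_add_cancel hi]] at h
  simp only [F, coeff_mk] at h
  rw [h]
  by_cases h4 : i = 4
  · subst h4
    rw [if_pos (by rw [hA]; ring), if_pos rfl]
  · rw [if_neg, if_neg h4]
    intro hc
    rw [show 4*2^(a+1) = A*4 by rw [hA]; ring] at hc
    exact h4 (Nat.eq_of_mul_eq_mul_left hApos hc)

lemma zero_small (a i : ℕ) (hi : i < 4) :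
    (stirling (2^(a+1)*i) (4*2^(a+1)) : R4) = 0 := by
  rw [stirling_eq_zero_of_lt]
  · exact Nat.cast_zero
  · have hApos : 0 < 2^(a+1) := Nat.pow_pos (by omega)
    calc 2^(a+1)*i < 2^(a+1)*4 := (Nat.mul_lt_mul_left hApos).mpr hi
      _ = 4*2^(a+1) := by ring

lemma cycle (a : ℕ) : ∀ j : ℕ,
    (stirling (2^(a+1)*(4*j+4)) (4*2^(a+1)) : R4) = 1 ∧
    (stirling (2^(a+1)*(4*j+5)) (4*2^(a+1)) : R4) = 2 ∧
    (stirling (2^(a+1)*(4*j+6)) (4*2^(a+1)) : R4) = 3 ∧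
    (stirling (2^(a+1)*(4*j+7)) (4*2^(a+1)) : R4) = 0 := by
  have h4 : (4 : R4) = 0 := by decide
  intro j
  induction j with
  | zero =>
    have k4 := key a 4 (by omega)
    have k5 := key a 5 (by omega)
    have k6 := key a 6 (by omega)
    have k7 := key a 7 (by omega)
    norm_num at k4 k5 k6 k7
    rw [zero_small a 3 (by omega), zero_small a 2 (by omega)] at k4
    have h4v : (stirling (2^(a+1)*4) (4*2^(a+1)) : R4) = 1 := by linear_combination k4
    rw [zero_small a 3 (by omega), h4v] at k5
    have h5v : (stirling (2^(a+1)*5) (4*2^(a+1)) : R4) = 2 := by linear_combination k5 - h4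
    rw [h4v, h5v] at k6
    have h6v : (stirling (2^(a+1)*6) (4*2^(a+1)) : R4) = 3 := by linear_combination k6 - 2*h4
    rw [h5v, h6v] at k7
    have h7v : (stirling (2^(a+1)*7) (4*2^(a+1)) : R4) = 0 := by linear_combination k7 - 2*h4
    exact ⟨by simpa using h4v, by simpa using h5v, by simpa using h6v, by simpa using h7v⟩
  | succ j ih =>
    obtain ⟨i1, i2, i3, i4⟩ := ih
    have k8 := key a (4*j+8) (by omega)
    have k9 := key a (4*j+9) (by omega)
    have k10 := key a (4*j+10) (by omega)
    have k11 := key a (4*j+11) (by omega)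
    simp only [show 4*j+8-1 = 4*j+7 by omega, show 4*j+8-2 = 4*j+6 by omega,
      show 4*j+9-1 = 4*j+8 by omega, show 4*j+9-2 = 4*j+7 by omega,
      show 4*j+10-1 = 4*j+9 by omega, show 4*j+10-2 = 4*j+8 by omega,
      show 4*j+11-1 = 4*j+10 by omega, show 4*j+11-2 = 4*j+9 by omega] at k8 k9 k10 k11
    rw [if_neg (by omega : ¬(4*j+8 = 4))] at k8
    rw [if_neg (by omega : ¬(4*j+9 = 4))] at k9
    rw [if_neg (by omega : ¬(4*j+10 = 4))] at k10
    rw [if_neg (by omega : ¬(4*j+11 = 4))] at k11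
    rw [i4, i3] at k8
    have h8v : (stirling (2^(a+1)*(4*j+8)) (4*2^(a+1)) : R4) = 1 := by
      linear_combination k8 - h4
    rw [i4, h8v] at k9
    have h9v : (stirling (2^(a+1)*(4*j+9)) (4*2^(a+1)) : R4) = 2 := by
      linear_combination k9 - h4
    rw [h8v, h9v] at k10
    have h10v : (stirling (2^(a+1)*(4*j+10)) (4*2^(a+1)) : R4) = 3 := by
      linear_combination k10 - 2*h4
    rw [h9v, h10v] at k11
    have h11v : (stirling (2^(a+1)*(4*j+11)) (4*2^(a+1)) : R4) = 0 := by
      linear_combination k11 - 2*h4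
    refine ⟨?_, ?_, ?_, ?_⟩
    · rw [show 4*(j+1)+4 = 4*j+8 by omega]; exact h8v
    · rw [show 4*(j+1)+5 = 4*j+9 by omega]; exact h9v
    · rw [show 4*(j+1)+6 = 4*j+10 by omega]; exact h10v
    · rw [show 4*(j+1)+7 = 4*j+11 by omega]; exact h11v

theorem stirling_shift_mod_four (c n m : ℕ) (hc : 0 < c) (hm : 3 ≤ m) (hmn : m ≤ n) :
    stirling (c * 2 ^ n + 2 ^ (m - 1)) (2 ^ m) ≡ 3 [MOD 4] := by
  obtain ⟨a, rfl⟩ : ∃ a, m = a + 3 := ⟨m - 3, by omega⟩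
  obtain ⟨d, rfl⟩ : ∃ d, n = a + 3 + d := ⟨n - (a+3), by omega⟩
  have ht : 1 ≤ c * 2^d := Nat.one_le_iff_ne_zero.mpr (by positivity)
  have hN : c * 2^(a+3+d) + 2^(a+3-1) = 2^(a+1) * (4*(c*2^d - 1) + 6) := by
    rw [show a+3-1 = a+2 by omega]
    rw [show 4*(c*2^d - 1) + 6 = 4*(c*2^d) + 2 by omega]
    ring
  have h3 := (cycle a (c*2^d - 1)).2.2.1
  rw [← hN, show 4*2^(a+1) = 2^(a+3) by ring] at h3
  have : ((stirling (c * 2^(a+3+d) + 2^(a+3-1)) (2^(a+3)) : ℕ) : ZMod 4) = ((3:ℕ) : ZMod 4) := by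
    rw [h3]; decide
  exact (ZMod.natCast_eq_natCast_iff _ _ _).mp this
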